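/- Fix an integer k ≥ 2 and a positive integer α. For Re(s) > 1, ∑_{m≥1} τ_k(αm) m^{-s} = H_α(s) ζ(s)^k, where H_α(s) = (∑_{m ∣ α^∞} τ_k(αm) m^{-s}) ∏_{p ∣ α}(1 − p^{-s})^k. Moreover, for any σ₀ > 0 and ε > 0, H_α(s) ≪_{k,σ₀,ε} α^ε uniformly on Re(s) ≥ σ₀. -/

import Mathlib

/-- The `k`-fold divisor function: the number of ordered factorizations of `n`
into `k` positive integers. -/
noncomputable def tauk (k n : ℕ) : ℕ := Nat.card {f : Fin k → ℕ // ∏ i, f i = n}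



open ArithmeticFunction Finset
open scoped ArithmeticFunction.zeta

lemma tauk_eq_card (k : ℕ) {n : ℕ} (hn : n ≠ 0) :
    tauk k n = (Nat.finMulAntidiag k n).card := by
  rw [← Nat.card_eq_finsetCard]
  exact Nat.card_congr <| Equiv.subtypeEquivRight fun f => by
    simp [Nat.mem_finMulAntidiag, hn]

lemma card_finMulAntidiag_succ (k : ℕ) {n : ℕ} (hn : n ≠ 0) :
    (Nat.finMulAntidiag (k+1) n).card
      = ∑ x ∈ n.divisorsAntidiagonal, (Nat.finMulAntidiag k x.2).card := by
  rw [Finset.card_eq_sum_card_fiberwise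
    (f := fun f : Fin (k+1) → ℕ => (f 0, ∏ i : Fin k, f i.succ))
    (t := n.divisorsAntidiagonal) ?_]
  · refine Finset.sum_congr rfl fun x hx => ?_
    have hx' := (Nat.mem_divisorsAntidiagonal.mp hx)
    refine Finset.card_bij' (fun f _ => Fin.tail f) (fun g _ => Fin.cons x.1 g) ?_ ?_ ?_ ?_
    · intro f hf
      obtain ⟨hf1, hf2⟩ := Finset.mem_filter.mp hf
      have h2 : ∏ i : Fin k, f i.succ = x.2 := congrArg Prod.snd hf2
      have hx2 : x.2 ≠ 0 := fun h => hx'.2 (by rw [← hx'.1, h, mul_zero])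
      rw [Nat.mem_finMulAntidiag]
      exact ⟨h2, hx2⟩
    · intro g hg
      rw [Nat.mem_finMulAntidiag] at hg
      refine Finset.mem_filter.mpr ⟨?_, ?_⟩
      · rw [Nat.mem_finMulAntidiag]
        refine ⟨?_, hn⟩
        rw [Fin.prod_univ_succ]
        simp only [Fin.cons_zero, Fin.cons_succ]
        rw [hg.1, hx'.1]
      · simp only [Fin.cons_zero, Fin.cons_succ]
        rw [hg.1]
    · intro f hf
      obtain ⟨hf1, hf2⟩ := Finset.mem_filter.mp hf
      have h1 : f 0 = x.1 := congrArg Prod.fst hf2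
      have := Fin.cons_self_tail (α := fun _ => ℕ) f
      rw [h1] at this
      exact this
    · intro g hg
      exact Fin.tail_cons _ _
  · intro f hf
    rw [Finset.mem_coe, Nat.mem_finMulAntidiag] at hf
    rw [Finset.mem_coe, Nat.mem_divisorsAntidiagonal]
    exact ⟨by show f 0 * ∏ i : Fin k, f i.succ = n; rw [← Fin.prod_univ_succ, hf.1], hn⟩

lemma tauk_eq_zetapow (k : ℕ) : ∀ {n : ℕ}, n ≠ 0 →
    tauk k n = (ζ ^ k : ArithmeticFunction ℕ) n := by
  induction k with
  | zero =>
    intro n hn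
    rw [pow_zero, ArithmeticFunction.one_apply, tauk_eq_card _ hn]
    rcases eq_or_ne n 1 with rfl | h1
    · rw [Nat.finMulAntidiag_one]; simp
    · rw [Nat.finMulAntidiag_zero_left h1]; simp [h1]
  | succ k ih =>
    intro n hn
    rw [tauk_eq_card _ hn, card_finMulAntidiag_succ _ hn, pow_succ',
      ArithmeticFunction.mul_apply]
    refine Finset.sum_congr rfl fun x hx => ?_
    obtain ⟨h1, h2⟩ := Nat.mem_divisorsAntidiagonal.mp hx
    have hx1 : x.1 ≠ 0 := fun h => h2 (by rw [← h1, h, zero_mul])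
    have hx2 : x.2 ≠ 0 := fun h => h2 (by rw [← h1, h, mul_zero])
    rw [ArithmeticFunction.zeta_apply_ne hx1, one_mul, ← ih hx2, tauk_eq_card _ hx2]


open ArithmeticFunction Finset

lemma isMultiplicative_zetapow (k : ℕ) : (ζ ^ k : ArithmeticFunction ℕ).IsMultiplicative := by
  induction k with
  | zero => rw [pow_zero]; exact ArithmeticFunction.isMultiplicative_one
  | succ k ih => rw [pow_succ]; exact ih.mul ArithmeticFunction.isMultiplicative_zeta

lemma tauk_mul_coprime (k : ℕ) {m n : ℕ} (hm : m ≠ 0) (hn : n ≠ 0) (h : m.Coprime n) :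
    tauk k (m * n) = tauk k m * tauk k n := by
  rw [tauk_eq_zetapow k (mul_ne_zero hm hn), tauk_eq_zetapow k hm, tauk_eq_zetapow k hn,
    (isMultiplicative_zetapow k).map_mul_of_coprime h]

lemma tauk_one (k : ℕ) : tauk k 1 = 1 := by
  rw [tauk_eq_zetapow k one_ne_zero, (isMultiplicative_zetapow k).map_one]

lemma tauk_pos (k : ℕ) {n : ℕ} (hn : n ≠ 0) : 0 < tauk (k+1) n := by
  rw [tauk_eq_card _ hn]
  refine Finset.card_pos.mpr ⟨Fin.cons n (fun _ => 1), ?_⟩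
  rw [Nat.mem_finMulAntidiag, Fin.prod_univ_succ]
  simp [hn]

lemma tauk_prime_pow (k j : ℕ) {p : ℕ} (hp : p.Prime) :
    tauk (k+1) (p ^ j) = (j + k).choose k := by
  induction k generalizing j with
  | zero =>
    rw [tauk_eq_zetapow 1 (pow_ne_zero _ hp.pos.ne'), pow_one,
      ArithmeticFunction.zeta_apply_ne (pow_ne_zero _ hp.pos.ne')]
    simp
  | succ k ih =>
    have hpj : (p : ℕ) ^ j ≠ 0 := pow_ne_zero _ hp.pos.ne'
    rw [tauk_eq_card _ hpj, card_finMulAntidiag_succ _ hpj]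
    have : ∀ i e : ℕ, (Nat.finMulAntidiag (k+1) (p ^ e)).card = (e + k).choose k := by
      intro i e
      rw [← tauk_eq_card _ (pow_ne_zero _ hp.pos.ne'), ih]
    calc ∑ x ∈ (p^j).divisorsAntidiagonal, (Nat.finMulAntidiag (k+1) x.2).card
        = ∑ d ∈ (p^j).divisors, (Nat.finMulAntidiag (k+1) (p^j / d)).card :=
          Nat.sum_divisorsAntidiagonal (fun a b => (Nat.finMulAntidiag (k+1) b).card)
      _ = ∑ i ∈ Finset.range (j+1), (Nat.finMulAntidiag (k+1) (p^j / p^i)).card :=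
          Nat.sum_divisors_prime_pow hp
      _ = ∑ i ∈ Finset.range (j+1), (i + k).choose k := by
          rw [← Finset.sum_range_reflect]
          refine Finset.sum_congr rfl fun i hi => ?_
          rw [Finset.mem_range] at hi
          rw [Nat.pow_div (by omega) hp.pos, this 0]
          congr 2
          omega
      _ = (j + (k+1)).choose (k+1) := by rw [Nat.sum_range_add_choose, Nat.add_assoc]

lemma tauk_factorization_prod (k : ℕ) {n : ℕ} (hn : n ≠ 0) {S : Finset ℕ}
    (hS : n.primeFactors ⊆ S) :
    tauk k n = ∏ p ∈ S, tauk k (p ^ n.factorization p) := by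
  rw [tauk_eq_zetapow k hn, (isMultiplicative_zetapow k).multiplicative_factorization _ hn,
    Finsupp.prod]
  rw [Nat.support_factorization] at *
  rw [← Finset.prod_subset hS (fun p _ hp => ?_)]
  · refine Finset.prod_congr rfl fun p hp => ?_
    have hp' : p.Prime := Nat.prime_of_mem_primeFactors hp
    rw [tauk_eq_zetapow k (pow_ne_zero _ hp'.pos.ne')]
  · have : n.factorization p = 0 := by
      rw [← Nat.support_factorization] at hp
      exact Finsupp.notMem_support_iff.mp hp
    rw [this, pow_zero, tauk_one]


lemma tauk_exchange (k : ℕ) {x y z w : ℕ} (hx : x ≠ 0) (hy : y ≠ 0) (hz : z ≠ 0) (hw : w ≠ 0)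
    (h : ∀ q : ℕ, q.Prime →
      (x.factorization q = z.factorization q ∧ y.factorization q = w.factorization q) ∨
      (x.factorization q = w.factorization q ∧ y.factorization q = z.factorization q)) :
    tauk k x * tauk k y = tauk k z * tauk k w := by
  set S := ((x.primeFactors ∪ y.primeFactors) ∪ (z.primeFactors ∪ w.primeFactors)) with hSdef
  have hxS : x.primeFactors ⊆ S := Finset.subset_union_left.trans Finset.subset_union_left
  have hyS : y.primeFactors ⊆ S := Finset.subset_union_right.trans Finset.subset_union_left
  have hzS : z.primeFactors ⊆ S := Finset.subset_union_left.trans Finset.subset_union_right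
  have hwS : w.primeFactors ⊆ S := Finset.subset_union_right.trans Finset.subset_union_right
  rw [tauk_factorization_prod k hx hxS, tauk_factorization_prod k hy hyS,
    tauk_factorization_prod k hz hzS, tauk_factorization_prod k hw hwS,
    ← Finset.prod_mul_distrib, ← Finset.prod_mul_distrib]
  refine Finset.prod_congr rfl fun q hq => ?_
  have hq' : q.Prime := by
    rw [hSdef] at hq
    rcases Finset.mem_union.mp hq with hq1 | hq1 <;> rcases Finset.mem_union.mp hq1 with hq2 | hq2 <;>
      exact Nat.prime_of_mem_primeFactors hq2
  rcases h q hq' with ⟨h1, h2⟩ | ⟨h1, h2⟩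
  · rw [h1, h2]
  · rw [h1, h2, mul_comm]

lemma tauk_alpha_mul (k : ℕ) {a m n : ℕ} (ha : a ≠ 0) (hm : m ≠ 0) (hn : n ≠ 0)
    (h : m.Coprime n) :
    tauk k (a * (m * n)) * tauk k a = tauk k (a * m) * tauk k (a * n) := by
  refine tauk_exchange k (mul_ne_zero ha (mul_ne_zero hm hn)) ha (mul_ne_zero ha hm) (mul_ne_zero ha hn) fun q hq => ?_
  have key : m.factorization q = 0 ∨ n.factorization q = 0 := by
    by_contra hc
    push_neg at hc
    have h1 : q ∣ m := Nat.dvd_of_factorization_pos hc.1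
    have h2 : q ∣ n := Nat.dvd_of_factorization_pos hc.2
    have hd : q ∣ 1 := h ▸ Nat.dvd_gcd h1 h2
    exact hq.one_lt.ne' (Nat.dvd_one.mp hd)
  rw [Nat.factorization_mul ha (mul_ne_zero hm hn), Nat.factorization_mul ha hm,
    Nat.factorization_mul ha hn, Nat.factorization_mul hm hn]
  simp only [Finsupp.add_apply]
  rcases key with h0 | h0 <;> rw [h0] <;> omega

lemma tauk_alpha_prime_pow (k : ℕ) {a p : ℕ} (ha : a ≠ 0) (hp : p.Prime) (e : ℕ) :
    tauk k (a * p ^ e) * tauk k (p ^ a.factorization p)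
      = tauk k a * tauk k (p ^ (a.factorization p + e)) := by
  refine tauk_exchange k (mul_ne_zero ha (pow_ne_zero _ hp.pos.ne')) (pow_ne_zero _ hp.pos.ne') ha
    (pow_ne_zero _ hp.pos.ne') fun q hq => ?_
  have hply1 : ∀ t : ℕ, ((p ^ t).factorization) p = t := fun t => by
    rw [hp.factorization_pow, Finsupp.single_eq_same]
  have hply2 : ∀ t : ℕ, p ≠ q → ((p ^ t).factorization) q = 0 := fun t h => by
    rw [hp.factorization_pow, Finsupp.single_eq_of_ne' h]
  rw [Nat.factorization_mul ha (pow_ne_zero _ hp.pos.ne')]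
  simp only [Finsupp.add_apply]
  by_cases hpq : p = q
  · subst hpq
    rw [hply1 e, hply1 (a.factorization p), hply1 (a.factorization p + e)]
    right
    exact ⟨rfl, rfl⟩
  · rw [hply2 e hpq, hply2 (a.factorization p) hpq, hply2 (a.factorization p + e) hpq]
    left
    omega



lemma choose_le_pow' (r : ℕ) : ∀ n : ℕ, (n + r).choose r ≤ (n + 1) ^ r := by
  induction r with
  | zero => intro n; simp
  | succ r ih =>
    intro n
    have key := Nat.add_one_mul_choose_eq (n + r) r
    refine Nat.le_of_mul_le_mul_right ?_ (Nat.succ_pos r)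
    have h1 : (n + (r+1)).choose (r+1) * (r+1) = (n + r + 1) * (n + r).choose r := by
      rw [← Nat.add_assoc, ← key]
    rw [h1]
    calc (n + r + 1) * (n + r).choose r ≤ ((n+1) * (r+1)) * ((n + 1) ^ r) := by
          apply Nat.mul_le_mul _ (ih n)
          nlinarith
      _ = (n+1)^(r+1) * (r+1) := by ring
lemma pow_le_factorial_mul_choose (r : ℕ) : ∀ n : ℕ, (n + 1) ^ r ≤ r.factorial * ((n + r).choose r) := by
  induction r with
  | zero => intro n; simp
  | succ r ih =>
    intro n
    have key := Nat.add_one_mul_choose_eq (n + r) r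
    calc (n+1)^(r+1) = (n+1)^r * (n+1) := by ring
      _ ≤ (r.factorial * ((n + r).choose r)) * (n + r + 1) := by
          apply Nat.mul_le_mul (ih n); omega
      _ = r.factorial * ((n + r + 1) * (n + r).choose r) := by ring
      _ = r.factorial * ((n + (r+1)).choose (r+1) * (r+1)) := by rw [← Nat.add_assoc, ← key]
      _ = (r+1).factorial * ((n + (r+1)).choose (r+1)) := by
          rw [Nat.factorial_succ]; ring

lemma binom_submult (r a e : ℕ) :
    (a + e + r).choose r ≤ (a + 1) ^ r * (r.factorial * ((e + r).choose r)) := by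
  calc (a + e + r).choose r ≤ (a + e + 1) ^ r := choose_le_pow' r (a + e)
    _ ≤ ((a+1) * (e+1)) ^ r := Nat.pow_le_pow_left (by nlinarith) r
    _ = (a+1)^r * (e+1)^r := mul_pow _ _ _
    _ ≤ (a+1)^r * (r.factorial * ((e + r).choose r)) :=
        Nat.mul_le_mul_left _ (pow_le_factorial_mul_choose r e)

lemma rpow_pow_flip {x : ℝ} (hx : 0 ≤ x) (e : ℕ) (t : ℝ) :
    ((x ^ e : ℝ)) ^ t = (x ^ t) ^ e := by
  rw [← Real.rpow_natCast x e, ← Real.rpow_mul hx, mul_comm, Real.rpow_mul hx,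
    Real.rpow_natCast]



open Complex

noncomputable def fA (k α : ℕ) (s : ℂ) (m : ℕ) : ℂ := (tauk k (α * m) : ℂ) * (m : ℂ) ^ (-s)

-- the geometric-type majorant at a prime p
lemma summable_majorant (r a : ℕ) {y : ℝ} (hy0 : 0 ≤ y) (hy : y < 1) :
    Summable (fun e : ℕ => (((a+1)^r * r.factorial : ℕ) : ℝ) * (((e + r).choose r : ℝ) * y ^ e)) :=
  (summable_choose_mul_geometric_of_norm_lt_one (R := ℝ) r (by rwa [Real.norm_eq_abs, _root_.abs_of_nonneg hy0])).mul_left _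

lemma norm_fA_prime_pow (k α : ℕ) {p : ℕ} (hp : p.Prime) (s : ℂ) (e : ℕ) :
    ‖(tauk k (α * p ^ e) : ℂ) * ((p ^ e : ℕ) : ℂ) ^ (-s)‖
      = (tauk k (α * p ^ e) : ℝ) * ((p : ℝ) ^ (-s.re)) ^ e := by
  rw [norm_mul, Complex.norm_natCast, Complex.norm_natCast_cpow_of_pos (pow_pos hp.pos e),
    neg_re, Nat.cast_pow, rpow_pow_flip (by positivity)]

-- termwise bound: tauk (r+1) (α p^e) ≤ tauk (r+1) α * ((a+1)^r r! C(e+r,r))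
lemma tauk_alpha_pp_le (r : ℕ) {α p : ℕ} (hα : α ≠ 0) (hp : p.Prime) (e : ℕ) :
    tauk (r+1) (α * p ^ e)
      ≤ tauk (r+1) α * ((α.factorization p + 1) ^ r * (r.factorial * ((e + r).choose r))) := by
  have h1 : tauk (r+1) (α * p ^ e) ≤ tauk (r+1) (α * p ^ e) * tauk (r+1) (p ^ α.factorization p) :=
    Nat.le_mul_of_pos_right _ (tauk_pos r (pow_ne_zero _ hp.pos.ne'))
  rw [tauk_alpha_prime_pow (r+1) hα hp e] at h1
  refine h1.trans ?_
  rw [tauk_prime_pow r _ hp]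
  exact Nat.mul_le_mul_left _ (binom_submult r (α.factorization p) e)

lemma euler_core (r α : ℕ) (hα : α ≠ 0) {s : ℂ} (hs : 0 < s.re) :
    (Summable fun m : Nat.factoredNumbers α.primeFactors => ‖fA (r+1) α s m‖) ∧
      HasSum (fun m : Nat.factoredNumbers α.primeFactors => fA (r+1) α s m)
        (∏ p ∈ α.primeFactors,
          ∑' e : ℕ, (tauk (r+1) (p ^ (α.factorization p + e)) : ℂ) * ((p ^ e : ℕ) : ℂ) ^ (-s)) := by
  have hτα : ((tauk (r+1) α : ℕ) : ℂ) ≠ 0 := by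
    exact_mod_cast (tauk_pos r hα).ne'
  set f : ℕ → ℂ := fun m => (tauk (r+1) (α * m) : ℂ) / (tauk (r+1) α : ℂ) * (m : ℂ) ^ (-s)
    with hfdef
  have hf1 : f 1 = 1 := by
    simp [hfdef, hτα]
  have hmul : ∀ {m n : ℕ}, m.Coprime n → f (m * n) = f m * f n := by
    intro m n hmn
    rcases eq_or_ne m 0 with rfl | hm
    · have hn1 : n = 1 := by simpa using hmn
      subst hn1; rw [mul_one, hf1, mul_one]
    rcases eq_or_ne n 0 with rfl | hn
    · have hm1 : m = 1 := by simpa [Nat.coprime_zero_right] using hmn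
      subst hm1; rw [one_mul, hf1, one_mul]
    have hcpow : ((m * n : ℕ) : ℂ) ^ (-s) = ((m : ℕ) : ℂ) ^ (-s) * ((n : ℕ) : ℂ) ^ (-s) := by
      have := Complex.mul_cpow_ofReal_nonneg (Nat.cast_nonneg m) (Nat.cast_nonneg n) (-s)
      push_cast at this ⊢
      exact this
    have hτ : ((tauk (r+1) (α * (m * n)) : ℕ) : ℂ) * (tauk (r+1) α : ℂ)
        = (tauk (r+1) (α * m) : ℂ) * (tauk (r+1) (α * n) : ℂ) := by
      exact_mod_cast congrArg (Nat.cast (R := ℂ)) (tauk_alpha_mul (r+1) hα hm hn hmn)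
    have hscalar : ((tauk (r+1) (α * (m * n)) : ℕ) : ℂ) / (tauk (r+1) α : ℂ)
        = ((tauk (r+1) (α * m) : ℕ) : ℂ) / (tauk (r+1) α : ℂ)
          * (((tauk (r+1) (α * n) : ℕ) : ℂ) / (tauk (r+1) α : ℂ)) := by
      rw [div_mul_div_comm, div_eq_div_iff hτα (mul_ne_zero hτα hτα)]
      linear_combination ((tauk (r+1) α : ℕ) : ℂ) * hτ
    simp only [hfdef]
    rw [hcpow, hscalar]
    ring
  have hsump : ∀ {p : ℕ}, p.Prime → Summable fun e : ℕ => ‖f (p ^ e)‖ := by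
    intro p hp
    have hy0 : (0:ℝ) ≤ (p:ℝ) ^ (-s.re) := Real.rpow_nonneg (Nat.cast_nonneg p) _
    have hy1 : (p:ℝ) ^ (-s.re) < 1 :=
      Real.rpow_lt_one_of_one_lt_of_neg (by exact_mod_cast hp.one_lt) (by linarith)
    refine Summable.of_nonneg_of_le (fun e => norm_nonneg _)
      (fun e => ?_) (summable_majorant r (α.factorization p) hy0 hy1)
    have hnorm : ‖f (p ^ e)‖
        = (tauk (r+1) (α * p ^ e) : ℝ) / (tauk (r+1) α : ℝ) * ((p : ℝ) ^ (-s.re)) ^ e := by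
      simp only [hfdef]
      rw [norm_mul, norm_div, Complex.norm_natCast, Complex.norm_natCast,
        Complex.norm_natCast_cpow_of_pos (pow_pos hp.pos e), neg_re, Nat.cast_pow,
        rpow_pow_flip (by positivity)]
    rw [hnorm]
    have hτpos : (0:ℝ) < (tauk (r+1) α : ℝ) := by exact_mod_cast tauk_pos r hα
    have hle : (tauk (r+1) (α * p ^ e) : ℝ) / (tauk (r+1) α : ℝ)
        ≤ (((α.factorization p + 1) ^ r * r.factorial : ℕ) : ℝ) * ((e + r).choose r : ℝ) := by
      rw [div_le_iff₀ hτpos]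
      have := tauk_alpha_pp_le r hα hp e
      calc (tauk (r+1) (α * p ^ e) : ℝ)
          ≤ ((tauk (r+1) α * ((α.factorization p + 1) ^ r * (r.factorial * ((e + r).choose r))) : ℕ) : ℝ) := by
            exact_mod_cast this
        _ = (((α.factorization p + 1) ^ r * r.factorial : ℕ) : ℝ) * ((e + r).choose r : ℝ) * (tauk (r+1) α : ℝ) := by
            push_cast; ring
    calc (tauk (r+1) (α * p ^ e) : ℝ) / (tauk (r+1) α : ℝ) * ((p : ℝ) ^ (-s.re)) ^ e
        ≤ (((α.factorization p + 1) ^ r * r.factorial : ℕ) : ℝ) * ((e + r).choose r : ℝ)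
            * ((p : ℝ) ^ (-s.re)) ^ e := by
          apply mul_le_mul_of_nonneg_right hle (by positivity)
      _ = (((α.factorization p + 1) ^ r * r.factorial : ℕ) : ℝ)
            * (((e + r).choose r : ℝ) * ((p : ℝ) ^ (-s.re)) ^ e) := by ring
  obtain ⟨hS, hH⟩ := EulerProduct.summable_and_hasSum_factoredNumbers_prod_filter_prime_tsum
    hf1 hmul hsump α.primeFactors
  rw [Finset.filter_true_of_mem (fun p hp => Nat.prime_of_mem_primeFactors hp)] at hH
  have hfa : ∀ m : ℕ, fA (r+1) α s m = (tauk (r+1) α : ℂ) * f m := by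
    intro m
    simp only [fA, hfdef]
    field_simp
  constructor
  · refine Summable.congr (hS.mul_left ‖((tauk (r+1) α : ℕ) : ℂ)‖) ?_
    intro m
    rw [← norm_mul, ← hfa]
  · have hH2 := hH.mul_left ((tauk (r+1) α : ℕ) : ℂ)
    have heqfun : (fun m : Nat.factoredNumbers α.primeFactors => fA (r+1) α s m)
        = fun m : Nat.factoredNumbers α.primeFactors => (tauk (r+1) α : ℂ) * f m := by
      funext m; exact hfa m
    rw [heqfun]
    convert hH2 using 1
    case e'_3 => rfl
    -- value identity
    rw [tauk_factorization_prod (r+1) hα (subset_refl _), Nat.cast_prod,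
      ← Finset.prod_mul_distrib]
    refine Finset.prod_congr rfl fun p hp => ?_
    have hp' : p.Prime := Nat.prime_of_mem_primeFactors hp
    rw [← tsum_mul_left]
    refine tsum_congr fun e => ?_
    have hτ : ((tauk (r+1) (α * p ^ e) : ℕ) : ℂ) * (tauk (r+1) (p ^ α.factorization p) : ℂ)
        = (tauk (r+1) α : ℂ) * (tauk (r+1) (p ^ (α.factorization p + e)) : ℂ) := by
      exact_mod_cast congrArg (Nat.cast (R := ℂ)) (tauk_alpha_prime_pow (r+1) hα hp' e)
    have hsc : (tauk (r+1) (p ^ α.factorization p) : ℂ)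
        * ((tauk (r+1) (α * p ^ e) : ℂ) / (tauk (r+1) α : ℂ))
        = (tauk (r+1) (p ^ (α.factorization p + e)) : ℂ) := by
      field_simp
      linear_combination hτ
    simp only [hfdef]
    symm
    calc (tauk (r+1) (p ^ α.factorization p) : ℂ)
          * ((tauk (r+1) (α * p ^ e) : ℂ) / (tauk (r+1) α : ℂ) * ((p ^ e : ℕ) : ℂ) ^ (-s))
        = ((tauk (r+1) (p ^ α.factorization p) : ℂ)
            * ((tauk (r+1) (α * p ^ e) : ℂ) / (tauk (r+1) α : ℂ))) * ((p ^ e : ℕ) : ℂ) ^ (-s) := by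
          ring
      _ = (tauk (r+1) (p ^ (α.factorization p + e)) : ℂ) * ((p ^ e : ℕ) : ℂ) ^ (-s) := by
          rw [hsc]



open Complex

noncomputable def chifun (α : ℕ) : ℕ → ℂ := fun n => (1 : DirichletCharacter ℂ α) (n : ZMod α)

lemma chifun_mul (α m n : ℕ) : chifun α (m * n) = chifun α m * chifun α n := by
  simp only [chifun, Nat.cast_mul, map_mul]

lemma chifun_coprime {α n : ℕ} [NeZero α] (h : n.Coprime α) : chifun α n = 1 :=
  MulChar.one_apply ((ZMod.isUnit_iff_coprime n α).mpr h)

lemma chifun_not_coprime {α n : ℕ} [NeZero α] (h : ¬ n.Coprime α) : chifun α n = 0 :=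
  MulChar.map_nonunit _ (fun hu => h ((ZMod.isUnit_iff_coprime n α).mp hu))

lemma hasSum_chi (α : ℕ) [NeZero α] {s : ℂ} (hs : 1 < s.re) :
    LSeriesHasSum (chifun α) s
      (riemannZeta s * ∏ p ∈ α.primeFactors, (1 - (p : ℂ) ^ (-s))) := by
  have hsummable : LSeriesSummable (chifun α) s :=
    DirichletCharacter.LSeriesSummable_of_one_lt_re (1 : DirichletCharacter ℂ α) hs
  have hval : LSeries (chifun α) s
      = riemannZeta s * ∏ p ∈ α.primeFactors, (1 - (p : ℂ) ^ (-s)) := by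
    have h := DirichletCharacter.LSeries_changeLevel (one_dvd α) (1 : DirichletCharacter ℂ 1) hs
    rw [DirichletCharacter.changeLevel_one] at h
    rw [show (chifun α) = (fun n : ℕ => (1 : DirichletCharacter ℂ α) (n : ZMod α)) from rfl]
    rw [h]
    congr 1
    · have h1 : (fun n : ℕ => (1 : DirichletCharacter ℂ 1) (n : ZMod 1)) = (1 : ℕ → ℂ) := by
        funext n; exact MulChar.one_apply (isUnit_of_subsingleton _)
      rw [h1, LSeries_one_eq_riemannZeta hs]
    · refine Finset.prod_congr rfl fun p hp => ?_
      rw [MulChar.one_apply (isUnit_of_subsingleton _), one_mul]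
  exact hval ▸ hsummable.LSeriesHasSum

lemma LSeriesHasSum_congr' {f g : ℕ → ℂ} {s a : ℂ} (h : ∀ n, n ≠ 0 → f n = g n)
    (hf : LSeriesHasSum f s a) : LSeriesHasSum g s a := by
  have ht : LSeries.term f s = LSeries.term g s :=
    funext (LSeries.term_congr (fun {n} hn => h n hn) s)
  unfold LSeriesHasSum at *
  rwa [ht] at hf

noncomputable def Tfun (α r : ℕ) : ℕ → ℂ := fun n => (tauk (r+1) n : ℂ) * chifun α n

lemma tauk_one' {n : ℕ} (hn : n ≠ 0) : tauk 1 n = 1 := by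
  rw [tauk_eq_zetapow 1 hn, pow_one, ArithmeticFunction.zeta_apply_ne hn]

lemma tauk_succ_sum (r : ℕ) {n : ℕ} (hn : n ≠ 0) :
    (tauk (r+2) n : ℂ) = ∑ x ∈ n.divisorsAntidiagonal, (tauk (r+1) x.2 : ℂ) := by
  rw [tauk_eq_card _ hn, card_finMulAntidiag_succ _ hn, Nat.cast_sum]
  refine Finset.sum_congr rfl fun x hx => ?_
  have hx2 : x.2 ≠ 0 := by
    obtain ⟨h1, h2⟩ := Nat.mem_divisorsAntidiagonal.mp hx
    exact fun h => h2 (by rw [← h1, h, mul_zero])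
  rw [tauk_eq_card _ hx2]

lemma conv_T (α r : ℕ) [NeZero α] : ∀ n : ℕ, n ≠ 0 →
    (LSeries.convolution (chifun α) (Tfun α r)) n = Tfun α (r+1) n := by
  intro n hn
  simp only [LSeries.convolution_def]
  by_cases hcop : n.Coprime α
  · have hall : ∀ x ∈ n.divisorsAntidiagonal,
        chifun α x.1 * (Tfun α r) x.2 = (tauk (r+1) x.2 : ℂ) := by
      intro x hx
      obtain ⟨h1, h2⟩ := Nat.mem_divisorsAntidiagonal.mp hx
      have hc1 : x.1.Coprime α := Nat.Coprime.coprime_dvd_left ⟨x.2, h1.symm⟩ hcop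
      have hc2 : x.2.Coprime α := Nat.Coprime.coprime_dvd_left ⟨x.1, by rw [← h1, mul_comm]⟩ hcop
      rw [Tfun, chifun_coprime hc1, chifun_coprime hc2, one_mul, mul_one]
    rw [Finset.sum_congr rfl hall, Tfun, chifun_coprime hcop, mul_one, ← tauk_succ_sum r hn]
  · have hzero : ∀ x ∈ n.divisorsAntidiagonal, chifun α x.1 * (Tfun α r) x.2 = 0 := by
      intro x hx
      obtain ⟨h1, h2⟩ := Nat.mem_divisorsAntidiagonal.mp hx
      have : chifun α x.1 * chifun α x.2 = 0 := by
        rw [← chifun_mul, h1, chifun_not_coprime hcop]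
      calc chifun α x.1 * (Tfun α r) x.2
          = (tauk (r+1) x.2 : ℂ) * (chifun α x.1 * chifun α x.2) := by rw [Tfun]; ring
        _ = 0 := by rw [this, mul_zero]
    rw [Finset.sum_eq_zero hzero, Tfun, chifun_not_coprime hcop, mul_zero]

lemma hasSum_T (α : ℕ) [NeZero α] (r : ℕ) {s : ℂ} (hs : 1 < s.re) :
    LSeriesHasSum (Tfun α r) s
      ((riemannZeta s * ∏ p ∈ α.primeFactors, (1 - (p : ℂ) ^ (-s))) ^ (r+1)) := by
  induction r with
  | zero =>
    rw [pow_one]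
    refine LSeriesHasSum_congr' (fun n hn => ?_) (hasSum_chi α hs)
    rw [Tfun, tauk_one' hn, Nat.cast_one, one_mul]
  | succ r ih =>
    have conv := (hasSum_chi α hs).convolution ih
    rw [← pow_succ'] at conv
    exact LSeriesHasSum_congr' (conv_T α r) conv



open Complex

noncomputable def gfun (r α : ℕ) : ℕ → ℂ :=
  Set.indicator (Nat.factoredNumbers α.primeFactors) (fun n => (tauk (r+1) (α * n) : ℂ))

lemma term_g (r α : ℕ) (s : ℂ) : LSeries.term (gfun r α) s
    = Set.indicator (Nat.factoredNumbers α.primeFactors) (fA (r+1) α s) := by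
  funext n
  by_cases hmem : n ∈ Nat.factoredNumbers α.primeFactors
  · have hn : n ≠ 0 := Nat.ne_zero_of_mem_factoredNumbers hmem
    rw [LSeries.term_of_ne_zero hn, gfun, Set.indicator_of_mem hmem,
      Set.indicator_of_mem hmem, fA, Complex.cpow_neg, div_eq_mul_inv]
  · rw [Set.indicator_of_notMem hmem]
    rcases eq_or_ne n 0 with rfl | hn
    · exact LSeries.term_zero _ _
    · rw [LSeries.term_of_ne_zero hn, gfun, Set.indicator_of_notMem hmem, zero_div]

lemma hasSum_g (r α : ℕ) (hα : α ≠ 0) {s : ℂ} (hs : 0 < s.re) :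
    LSeriesHasSum (gfun r α) s
      (∏ p ∈ α.primeFactors,
        ∑' e : ℕ, (tauk (r+1) (p ^ (α.factorization p + e)) : ℂ) * ((p ^ e : ℕ) : ℂ) ^ (-s)) := by
  unfold LSeriesHasSum
  rw [term_g]
  exact hasSum_subtype_iff_indicator.mp (euler_core r α hα hs).2

-- the α-part of n : facts about d₀ = gcd n (α^n)
lemma dzero_factorization {α n q : ℕ} (hα : α ≠ 0) (hn : n ≠ 0) (hq : q.Prime) (hqα : q ∣ α) :
    (n.gcd (α ^ n)).factorization q = n.factorization q := by
  rw [Nat.factorization_gcd hn (pow_ne_zero _ hα), Finsupp.inf_apply, Nat.factorization_pow,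
    Finsupp.smul_apply, smul_eq_mul]
  have h1 : 0 < α.factorization q := hq.factorization_pos_of_dvd hα hqα
  have h2 : n.factorization q < n := Nat.factorization_lt _ hn
  exact min_eq_left (by nlinarith)

lemma dzero_factored {α n : ℕ} (hα : α ≠ 0) :
    n.gcd (α ^ n) ∈ Nat.factoredNumbers α.primeFactors ∨ n = 0 := by
  rcases eq_or_ne n 0 with rfl | hn
  · right; rfl
  · left
    rw [Nat.mem_factoredNumbers']
    intro p pp pd
    have : p ∣ α ^ n := pd.trans (Nat.gcd_dvd_right _ _)
    exact Nat.mem_primeFactors.mpr ⟨pp, pp.dvd_of_dvd_pow this, hα⟩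

lemma conv_gT (r α : ℕ) (hα : α ≠ 0) [NeZero α] : ∀ n : ℕ, n ≠ 0 →
    (LSeries.convolution (gfun r α) (Tfun α r)) n = (tauk (r+1) (α * n) : ℂ) := by
  intro n hn
  simp only [LSeries.convolution_def]
  set d₀ := n.gcd (α ^ n) with hd0
  have hd0n : d₀ ∣ n := Nat.gcd_dvd_left _ _
  have hd0ne : d₀ ≠ 0 := by
    intro h
    exact hn (Nat.gcd_eq_zero_iff.mp h).1
  set e₀ := n / d₀ with he0
  have hne : n = d₀ * e₀ := (Nat.mul_div_cancel' hd0n).symm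
  have he0ne : e₀ ≠ 0 := by
    intro h
    rw [h, mul_zero] at hne
    exact hn hne
  have hd0f : d₀ ∈ Nat.factoredNumbers α.primeFactors := (dzero_factored hα).resolve_right hn
  have he0cop : e₀.Coprime α := by
    by_contra hc
    obtain ⟨p, pp, hpe, hpα⟩ := Nat.Prime.not_coprime_iff_dvd.mp hc
    have h2 : e₀.factorization p = 0 := by
      rw [he0, Nat.factorization_div hd0n, Finsupp.tsub_apply,
        dzero_factorization hα hn pp hpα, Nat.sub_self]
    have h3 : 0 < e₀.factorization p := pp.factorization_pos_of_dvd he0ne hpe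
    omega
  -- uniqueness of the splitting
  have huniq : ∀ x : ℕ × ℕ, x ∈ n.divisorsAntidiagonal →
      x.1 ∈ Nat.factoredNumbers α.primeFactors → x.2.Coprime α → x = (d₀, e₀) := by
    rintro ⟨d, e⟩ hx hdf hecop
    obtain ⟨h1, _⟩ := Nat.mem_divisorsAntidiagonal.mp hx
    simp only at h1 hdf hecop ⊢
    have hdne : d ≠ 0 := fun h => hn (by rw [← h1, h, zero_mul])
    have hene : e ≠ 0 := fun h => hn (by rw [← h1, h, mul_zero])
    have hd : d = d₀ := by
      refine Nat.factorization_inj hdne hd0ne (Finsupp.ext fun q => ?_)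
      by_cases hq : q.Prime
      · by_cases hqα : q ∣ α
        · have hde : e.factorization q = 0 := by
            by_contra hc
            have : q ∣ e := Nat.dvd_of_factorization_pos hc
            obtain ⟨p, pp, hpe, hpα⟩ := Nat.Prime.not_coprime_iff_dvd.mp
              (show ¬ e.Coprime α from fun hcop => by
                have hd1 : q ∣ 1 := hcop ▸ Nat.dvd_gcd this hqα
                exact hq.one_lt.ne' (Nat.dvd_one.mp hd1))
            exact absurd hecop (Nat.Prime.not_coprime_iff_dvd.mpr ⟨p, pp, hpe, hpα⟩)
          have hnfact : n.factorization q = d.factorization q := by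
            rw [← h1, Nat.factorization_mul hdne hene, Finsupp.add_apply, hde, Nat.add_zero]
          rw [dzero_factorization hα hn hq hqα, hnfact]
        · have hqP : q ∉ α.primeFactors := fun hmem => hqα (Nat.mem_primeFactors.mp hmem).2.1
          have hzd : d.factorization q = 0 := by
            by_contra hc
            exact hqP ((Nat.mem_factoredNumbers'.mp hdf) q hq (Nat.dvd_of_factorization_pos hc))
          have hzd0 : d₀.factorization q = 0 := by
            by_contra hc
            exact hqP ((Nat.mem_factoredNumbers'.mp hd0f) q hq (Nat.dvd_of_factorization_pos hc))
          rw [hzd, hzd0]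
      · rw [Nat.factorization_eq_zero_of_not_prime _ hq,
          Nat.factorization_eq_zero_of_not_prime _ hq]
    have he : e = e₀ := by
      have h2 : d * e = d * e₀ := by rw [h1, hne, hd]
      exact Nat.eq_of_mul_eq_mul_left (Nat.pos_of_ne_zero hdne) h2
    rw [hd, he]
  have hmem : (d₀, e₀) ∈ n.divisorsAntidiagonal :=
    Nat.mem_divisorsAntidiagonal.mpr ⟨hne.symm, hn⟩
  rw [Finset.sum_eq_single_of_mem (d₀, e₀) hmem ?_]
  · -- value
    have hcop' : (α * d₀).Coprime e₀ := by
      refine Nat.Coprime.mul he0cop.symm ?_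
      exact Nat.Coprime.coprime_dvd_left (Nat.gcd_dvd_right n (α ^ n))
        (Nat.Coprime.pow_left n he0cop.symm)
    have hval : tauk (r+1) (α * n) = tauk (r+1) (α * d₀) * tauk (r+1) e₀ := by
      rw [hne, ← mul_assoc]
      exact tauk_mul_coprime (r+1) (mul_ne_zero hα hd0ne) he0ne hcop'
    simp only [gfun, Set.indicator_of_mem hd0f, Tfun, chifun_coprime he0cop, mul_one, hval]
    push_cast
    ring
  · rintro ⟨d, e⟩ hx hne'
    by_cases hdf : d ∈ Nat.factoredNumbers α.primeFactors
    · by_cases hecop : e.Coprime α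
      · exact absurd (huniq (d, e) hx hdf hecop) hne'
      · simp only [Tfun, chifun_not_coprime hecop, mul_zero]
    · simp only [gfun, Set.indicator_of_notMem hdf, zero_mul]


open Complex

lemma prod_bound_one {D : ℝ} (hD : 1 ≤ D) {δ : ℝ} (hδ : 0 < δ) :
    ∃ C : ℝ, 1 ≤ C ∧ ∀ α : ℕ, α ≠ 0 →
      ∏ p ∈ α.primeFactors, (D * ((α.factorization p + 1 : ℕ) : ℝ))
        ≤ C * (α : ℝ) ^ δ := by
  classical
  set y : ℝ := (2:ℝ) ^ (-δ) with hy
  have hy0 : 0 ≤ y := Real.rpow_nonneg (by norm_num) _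
  have hy1 : y < 1 := Real.rpow_lt_one_of_one_lt_of_neg (by norm_num) (by linarith)
  have hsum : Summable (fun a : ℕ => ((a : ℝ) + 1) * y ^ a) := by
    have h1 := summable_pow_mul_geometric_of_norm_lt_one (R := ℝ) 1
      (r := y) (by rwa [Real.norm_eq_abs, _root_.abs_of_nonneg hy0])
    have h2 := summable_geometric_of_lt_one hy0 hy1
    refine Summable.congr (h1.add h2) fun a => ?_
    push_cast
    ring
  set C₂ : ℝ := D * ∑' a : ℕ, ((a : ℝ) + 1) * y ^ a with hC₂
  set C₂' : ℝ := max 1 C₂ with hC₂'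
  have hC₂'1 : (1:ℝ) ≤ C₂' := le_max_left _ _
  set B : ℝ := (2 * D) ^ (1/δ) with hB
  have hB0 : 0 ≤ B := Real.rpow_nonneg (by linarith) _
  refine ⟨C₂' ^ (Nat.ceil B + 1), one_le_pow₀ hC₂'1, fun α hα => ?_⟩
  -- per-prime bound
  have key : ∀ p ∈ α.primeFactors,
      D * ((α.factorization p + 1 : ℕ) : ℝ)
        ≤ (if (p:ℝ) ≤ B then C₂' else 1) * ((p ^ α.factorization p : ℕ) : ℝ) ^ δ := by
    intro p hp
    obtain ⟨hpp, hpd, -⟩ := Nat.mem_primeFactors.mp hp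
    set a := α.factorization p with ha
    have ha1 : 1 ≤ a := hpp.factorization_pos_of_dvd hα hpd
    have hp2 : (2:ℝ) ≤ (p:ℝ) := by exact_mod_cast hpp.two_le
    have hppos : (0:ℝ) < (p:ℝ) := by linarith
    have hpow : ((p ^ a : ℕ) : ℝ) ^ δ = ((p:ℝ) ^ δ) ^ a := by
      push_cast
      rw [← Real.rpow_natCast (p:ℝ) a, ← Real.rpow_mul hppos.le, mul_comm,
        Real.rpow_mul hppos.le, Real.rpow_natCast]
    have hpδ2 : (2:ℝ) ^ δ ≤ (p:ℝ) ^ δ := Real.rpow_le_rpow (by norm_num) hp2 hδ.le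
    by_cases hcase : (p:ℝ) ≤ B
    · rw [if_pos hcase, hpow]
      -- D (a+1) ≤ C₂' (p^δ)^a, using (p^δ * y) ≥ 1 and D(a+1) y^a ≤ C₂
      have h2δ : (2:ℝ) ^ δ * y = 1 := by
        rw [hy, ← Real.rpow_add (by norm_num : (0:ℝ) < 2)]
        simp
      have hone : (1:ℝ) ≤ (p:ℝ) ^ δ * y := by
        calc (1:ℝ) = (2:ℝ) ^ δ * y := h2δ.symm
          _ ≤ (p:ℝ) ^ δ * y := by
              apply mul_le_mul_of_nonneg_right hpδ2 hy0
      have honea : (1:ℝ) ≤ ((p:ℝ) ^ δ) ^ a * y ^ a := by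
        rw [← mul_pow]
        exact one_le_pow₀ hone
      have hterm : ((a:ℝ) + 1) * y ^ a ≤ ∑' b : ℕ, ((b : ℝ) + 1) * y ^ b :=
        Summable.le_tsum hsum a (fun j _ => by positivity)
      have hD0 : (0:ℝ) ≤ D := by linarith
      calc D * ((a + 1 : ℕ) : ℝ) = D * ((a:ℝ) + 1) * 1 := by push_cast; ring
        _ ≤ D * ((a:ℝ) + 1) * (((p:ℝ) ^ δ) ^ a * y ^ a) := by
            apply mul_le_mul_of_nonneg_left honea (by positivity)
        _ = (D * (((a:ℝ) + 1) * y ^ a)) * ((p:ℝ) ^ δ) ^ a := by ring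
        _ ≤ (D * ∑' b : ℕ, ((b : ℝ) + 1) * y ^ b) * ((p:ℝ) ^ δ) ^ a := by
            apply mul_le_mul_of_nonneg_right
              (mul_le_mul_of_nonneg_left hterm hD0) (by positivity)
        _ ≤ C₂' * ((p:ℝ) ^ δ) ^ a := by
            apply mul_le_mul_of_nonneg_right (le_max_right _ _) (by positivity)
    · rw [if_neg hcase, hpow, one_mul]
      push_neg at hcase
      have hBp : (2:ℝ) * D ≤ (p:ℝ) ^ δ := by
        have hBδ : B ^ δ = 2 * D := by
          rw [hB, ← Real.rpow_mul (by linarith), one_div, inv_mul_cancel₀ hδ.ne',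
            Real.rpow_one]
        calc (2:ℝ) * D = B ^ δ := hBδ.symm
          _ ≤ (p:ℝ) ^ δ := Real.rpow_le_rpow hB0 hcase.le hδ.le
      have h2a : ((a:ℝ) + 1) ≤ 2 ^ a := by
        have := Nat.lt_two_pow_self (n := a)
        exact_mod_cast Nat.succ_le_of_lt this
      calc D * ((a + 1 : ℕ) : ℝ) ≤ D * 2 ^ a := by
            push_cast
            apply mul_le_mul_of_nonneg_left h2a (by linarith)
        _ ≤ D ^ a * 2 ^ a := by
            apply mul_le_mul_of_nonneg_right (le_self_pow₀ hD (by omega)) (by positivity)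
        _ = (2 * D) ^ a := by rw [mul_pow]; ring
        _ ≤ ((p:ℝ) ^ δ) ^ a := pow_le_pow_left₀ (by linarith) hBp a
  -- assemble
  calc ∏ p ∈ α.primeFactors, (D * ((α.factorization p + 1 : ℕ) : ℝ))
      ≤ ∏ p ∈ α.primeFactors,
          ((if (p:ℝ) ≤ B then C₂' else 1) * ((p ^ α.factorization p : ℕ) : ℝ) ^ δ) :=
        Finset.prod_le_prod (fun p _ => by positivity) key
    _ = (∏ p ∈ α.primeFactors, (if (p:ℝ) ≤ B then C₂' else 1))
          * ∏ p ∈ α.primeFactors, ((p ^ α.factorization p : ℕ) : ℝ) ^ δ :=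
        Finset.prod_mul_distrib
    _ ≤ C₂' ^ (Nat.ceil B + 1) * (α : ℝ) ^ δ := by
        have hprod2 : ∏ p ∈ α.primeFactors, ((p ^ α.factorization p : ℕ) : ℝ) ^ δ
            = (α : ℝ) ^ δ := by
          rw [Real.finset_prod_rpow _ _ (fun p _ => by positivity) δ, ← Nat.cast_prod]
          congr 2
          have := Nat.factorization_prod_pow_eq_self hα
          rw [Finsupp.prod, Nat.support_factorization] at this
          exact this
        rw [hprod2]
        apply mul_le_mul_of_nonneg_right _ (Real.rpow_nonneg (Nat.cast_nonneg α) δ)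
        rw [Finset.prod_ite _ _]
        rw [Finset.prod_const, Finset.prod_const, one_pow, mul_one]
        refine pow_le_pow_right₀ hC₂'1 ?_
        refine le_trans (Finset.card_le_card ?_) (le_of_eq (Finset.card_range (Nat.ceil B + 1)))
        intro p hp
        have hple := (Finset.mem_filter.mp hp).2
        have h1 : (p:ℝ) ≤ (Nat.ceil B : ℝ) := le_trans hple (Nat.le_ceil B)
        have h2 : p ≤ Nat.ceil B := by exact_mod_cast h1
        exact Finset.mem_range.mpr (by omega)

lemma prod_bound {D : ℝ} (hD : 1 ≤ D) (r : ℕ) (hr : r ≠ 0) {ε : ℝ} (hε : 0 < ε) :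
    ∃ C : ℝ, ∀ α : ℕ, α ≠ 0 →
      ∏ p ∈ α.primeFactors, (D * ((α.factorization p + 1 : ℕ) : ℝ) ^ r)
        ≤ C * (α : ℝ) ^ ε := by
  have hδ : 0 < ε / r := div_pos hε (by positivity)
  obtain ⟨C₀, hC₀1, hC₀⟩ := prod_bound_one hD hδ
  refine ⟨C₀ ^ r, fun α hα => ?_⟩
  have step1 : ∏ p ∈ α.primeFactors, (D * ((α.factorization p + 1 : ℕ) : ℝ) ^ r)
      ≤ (∏ p ∈ α.primeFactors, (D * ((α.factorization p + 1 : ℕ) : ℝ))) ^ r := by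
    rw [← Finset.prod_pow]
    refine Finset.prod_le_prod (fun p _ => by positivity) (fun p _ => ?_)
    rw [mul_pow]
    apply mul_le_mul_of_nonneg_right (le_self_pow₀ hD hr) (by positivity)
  have step2 : (∏ p ∈ α.primeFactors, (D * ((α.factorization p + 1 : ℕ) : ℝ))) ^ r
      ≤ (C₀ * (α : ℝ) ^ (ε / r)) ^ r := by
    apply pow_le_pow_left₀ (Finset.prod_nonneg (fun p _ => by positivity)) (hC₀ α hα)
  refine step1.trans (step2.trans (le_of_eq ?_))
  rw [mul_pow, ← Real.rpow_natCast ((α:ℝ) ^ (ε / r)) r, ← Real.rpow_mul (Nat.cast_nonneg α),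
    div_mul_cancel₀ _ (by positivity : (r:ℝ) ≠ 0)]


open Complex

noncomputable def Zc (σ₀ : ℝ) (r : ℕ) : ℝ :=
  ∑' e : ℕ, ((e + r).choose r : ℝ) * ((2:ℝ) ^ (-σ₀)) ^ e

noncomputable def Dc (σ₀ : ℝ) (r : ℕ) : ℝ :=
  max 1 (2 ^ (r+1) * ((r.factorial : ℝ) * Zc σ₀ r))

lemma factor_bound (r : ℕ) {α p : ℕ} (hα : α ≠ 0) (hp : p.Prime) {σ₀ : ℝ} (hσ : 0 < σ₀)
    {s : ℂ} (hs : σ₀ ≤ s.re) :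
    ‖(∑' e : ℕ, (tauk (r+1) (p ^ (α.factorization p + e)) : ℂ) * ((p ^ e : ℕ) : ℂ) ^ (-s))
        * (1 - (p : ℂ) ^ (-s)) ^ (r+1)‖
      ≤ Dc σ₀ r * ((α.factorization p + 1 : ℕ) : ℝ) ^ r := by
  set a := α.factorization p with ha
  have hspos : 0 < s.re := lt_of_lt_of_le hσ hs
  have hp1 : (1:ℝ) ≤ (p:ℝ) := by exact_mod_cast hp.one_lt.le
  have hp2 : (2:ℝ) ≤ (p:ℝ) := by exact_mod_cast hp.two_le
  set y : ℝ := (p:ℝ) ^ (-s.re) with hy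
  set y₀ : ℝ := (2:ℝ) ^ (-σ₀) with hy₀
  have hy0 : 0 ≤ y := Real.rpow_nonneg (by linarith) _
  have hy₀0 : 0 ≤ y₀ := Real.rpow_nonneg (by norm_num) _
  have hy₀1 : y₀ < 1 := Real.rpow_lt_one_of_one_lt_of_neg (by norm_num) (by linarith)
  have hyy₀ : y ≤ y₀ := by
    have hb : (2:ℝ) ^ σ₀ ≤ (p:ℝ) ^ s.re :=
      (Real.rpow_le_rpow (by norm_num) hp2 hσ.le).trans
        (Real.rpow_le_rpow_of_exponent_le hp1 hs)
    rw [hy, hy₀, Real.rpow_neg (by linarith), Real.rpow_neg (by norm_num)]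
    exact inv_anti₀ (Real.rpow_pos_of_pos (by norm_num) _) hb
  have hy1 : y < 1 := lt_of_le_of_lt hyy₀ hy₀1
  -- termwise norms
  have hnrm : ∀ e : ℕ, ‖(tauk (r+1) (p ^ (a + e)) : ℂ) * ((p ^ e : ℕ) : ℂ) ^ (-s)‖
      = (tauk (r+1) (p ^ (a + e)) : ℝ) * y ^ e := by
    intro e
    rw [norm_mul, Complex.norm_natCast,
      Complex.norm_natCast_cpow_of_pos (pow_pos hp.pos e), neg_re, Nat.cast_pow,
      rpow_pow_flip (by linarith), hy]
  have hterm_le : ∀ e : ℕ, (tauk (r+1) (p ^ (a + e)) : ℝ) * y ^ e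
      ≤ (((a+1)^r * r.factorial : ℕ) : ℝ) * (((e + r).choose r : ℝ) * y₀ ^ e) := by
    intro e
    have h1 : (tauk (r+1) (p ^ (a + e)) : ℝ)
        ≤ (((a+1)^r * r.factorial : ℕ) : ℝ) * ((e + r).choose r : ℝ) := by
      rw [tauk_prime_pow r (a+e) hp]
      have := binom_submult r a e
      calc ((a + e + r).choose r : ℝ)
          ≤ (((a + 1) ^ r * (r.factorial * ((e + r).choose r)) : ℕ) : ℝ) := by exact_mod_cast this
        _ = (((a+1)^r * r.factorial : ℕ) : ℝ) * ((e + r).choose r : ℝ) := by push_cast; ring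
    have h2 : y ^ e ≤ y₀ ^ e := pow_le_pow_left₀ hy0 hyy₀ e
    calc (tauk (r+1) (p ^ (a + e)) : ℝ) * y ^ e
        ≤ ((((a+1)^r * r.factorial : ℕ) : ℝ) * ((e + r).choose r : ℝ)) * y₀ ^ e :=
          mul_le_mul h1 h2 (by positivity) (by positivity)
      _ = (((a+1)^r * r.factorial : ℕ) : ℝ) * (((e + r).choose r : ℝ) * y₀ ^ e) := by ring
  have hsumL : Summable (fun e : ℕ =>
      ‖(tauk (r+1) (p ^ (a + e)) : ℂ) * ((p ^ e : ℕ) : ℂ) ^ (-s)‖) := by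
    refine Summable.of_nonneg_of_le (fun e => norm_nonneg _) (fun e => ?_)
      (summable_majorant r a hy₀0 hy₀1)
    rw [hnrm e]
    exact hterm_le e
  have hT : ‖∑' e : ℕ, (tauk (r+1) (p ^ (a + e)) : ℂ) * ((p ^ e : ℕ) : ℂ) ^ (-s)‖
      ≤ (((a+1)^r * r.factorial : ℕ) : ℝ) * Zc σ₀ r := by
    refine (norm_tsum_le_tsum_norm hsumL).trans ?_
    have := Summable.tsum_le_tsum (fun e => (hnrm e).le.trans (hterm_le e)) hsumL
      (summable_majorant r a hy₀0 hy₀1)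
    refine this.trans (le_of_eq ?_)
    rw [tsum_mul_left, Zc]
  have h1x : ‖(1 - (p : ℂ) ^ (-s)) ^ (r+1)‖ ≤ 2 ^ (r+1) := by
    rw [norm_pow]
    apply pow_le_pow_left₀ (norm_nonneg _)
    have hxn : ‖(p : ℂ) ^ (-s)‖ = y := by
      rw [Complex.norm_natCast_cpow_of_pos hp.pos, neg_re, hy]
    calc ‖1 - (p : ℂ) ^ (-s)‖ ≤ ‖(1 : ℂ)‖ + ‖(p : ℂ) ^ (-s)‖ := norm_sub_le _ _
      _ = 1 + y := by rw [norm_one, hxn]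
      _ ≤ 2 := by linarith
  have hZ0 : 0 ≤ Zc σ₀ r := tsum_nonneg (fun e => by positivity)
  calc ‖(∑' e : ℕ, (tauk (r+1) (p ^ (a + e)) : ℂ) * ((p ^ e : ℕ) : ℂ) ^ (-s))
        * (1 - (p : ℂ) ^ (-s)) ^ (r+1)‖
      = ‖∑' e : ℕ, (tauk (r+1) (p ^ (a + e)) : ℂ) * ((p ^ e : ℕ) : ℂ) ^ (-s)‖
        * ‖(1 - (p : ℂ) ^ (-s)) ^ (r+1)‖ := norm_mul _ _
    _ ≤ ((((a+1)^r * r.factorial : ℕ) : ℝ) * Zc σ₀ r) * 2 ^ (r+1) :=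
        mul_le_mul hT h1x (norm_nonneg _) (by positivity)
    _ = (2 ^ (r+1) * ((r.factorial : ℝ) * Zc σ₀ r)) * ((a + 1 : ℕ) : ℝ) ^ r := by
        push_cast; ring
    _ ≤ Dc σ₀ r * ((a + 1 : ℕ) : ℝ) ^ r := by
        apply mul_le_mul_of_nonneg_right (le_max_right _ _) (by positivity)


/-- `H_α(s) = (∑_{m ∣ α^∞} τ_k(αm) m^{-s}) ∏_{p ∣ α}(1 − p^{-s})^k`. -/
noncomputable def Hfun (k α : ℕ) (s : ℂ) : ℂ :=
  (∑' m : {m : ℕ // 0 < m ∧ ∀ p : ℕ, p.Prime → p ∣ m → p ∣ α},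
      (tauk k (α * m.1) : ℂ) * (m.1 : ℂ) ^ (-s)) *
    ∏ p ∈ α.primeFactors, (1 - (p : ℂ) ^ (-s)) ^ k

lemma set_eq {α : ℕ} (hα : α ≠ 0) :
    {m : ℕ | 0 < m ∧ ∀ p : ℕ, p.Prime → p ∣ m → p ∣ α}
      = Nat.factoredNumbers α.primeFactors := by
  ext m
  simp only [Set.mem_setOf_eq, Nat.mem_factoredNumbers']
  constructor
  · rintro ⟨hm, h⟩ p pp pd
    exact Nat.mem_primeFactors.mpr ⟨pp, h p pp pd, hα⟩
  · intro h
    refine ⟨?_, fun p pp pd => (Nat.mem_primeFactors.mp (h p pp pd)).2.1⟩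
    rcases Nat.eq_zero_or_pos m with rfl | hm
    · obtain ⟨p, hple, hpp⟩ := Nat.exists_infinite_primes (α + 1)
      have hmem := h p hpp (dvd_zero p)
      have hdvd : p ∣ α := (Nat.mem_primeFactors.mp hmem).2.1
      have := Nat.le_of_dvd (Nat.pos_of_ne_zero hα) hdvd
      omega
    · exact hm

lemma Hfun_eq (r α : ℕ) (hα : α ≠ 0) {s : ℂ} (hs : 0 < s.re) :
    Hfun (r+1) α s
      = (∏ p ∈ α.primeFactors,
          ∑' e : ℕ, (tauk (r+1) (p ^ (α.factorization p + e)) : ℂ) * ((p ^ e : ℕ) : ℂ) ^ (-s))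
        * ∏ p ∈ α.primeFactors, (1 - (p : ℂ) ^ (-s)) ^ (r+1) := by
  unfold Hfun
  congr 1
  calc (∑' m : {m : ℕ // 0 < m ∧ ∀ p : ℕ, p.Prime → p ∣ m → p ∣ α},
        (tauk (r+1) (α * m.1) : ℂ) * (m.1 : ℂ) ^ (-s))
      = ∑' m : Nat.factoredNumbers α.primeFactors, fA (r+1) α s m.1 :=
        tsum_congr_set_coe (fA (r+1) α s) (set_eq hα)
    _ = _ := (euler_core r α hα hs).2.tsum_eq

lemma part1 (r α : ℕ) (hα : 0 < α) {s : ℂ} (hs : 1 < s.re) :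
    HasSum (fun m : ℕ => (tauk (r+1) (α * (m + 1)) : ℂ) * ((m + 1 : ℂ) ^ (-s)))
      (Hfun (r+1) α s * riemannZeta s ^ (r+1)) := by
  haveI : NeZero α := ⟨hα.ne'⟩
  have h0 : 0 < s.re := lt_trans one_pos hs
  have hconv := (hasSum_g r α hα.ne' h0).convolution (hasSum_T α r hs)
  have htot := LSeriesHasSum_congr' (conv_gT r α hα.ne') hconv
  have hval : (∏ p ∈ α.primeFactors,
        ∑' e : ℕ, (tauk (r+1) (p ^ (α.factorization p + e)) : ℂ) * ((p ^ e : ℕ) : ℂ) ^ (-s))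
        * (riemannZeta s * ∏ p ∈ α.primeFactors, (1 - (p : ℂ) ^ (-s))) ^ (r+1)
      = Hfun (r+1) α s * riemannZeta s ^ (r+1) := by
    rw [Hfun_eq r α hα.ne' h0, mul_pow, ← Finset.prod_pow]
    ring
  rw [hval] at htot
  have hshift : HasSum
      (fun m : ℕ => LSeries.term (fun n => (tauk (r+1) (α * n) : ℂ)) s (m+1))
      (Hfun (r+1) α s * riemannZeta s ^ (r+1)) := by
    rw [hasSum_nat_add_iff 1]
    simpa [LSeriesHasSum] using htot
  have hfun : (fun m : ℕ => LSeries.term (fun n => (tauk (r+1) (α * n) : ℂ)) s (m+1))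
      = fun m : ℕ => (tauk (r+1) (α * (m + 1)) : ℂ) * ((m + 1 : ℂ) ^ (-s)) := by
    funext m
    rw [LSeries.term_of_ne_zero (Nat.succ_ne_zero m)]
    push_cast
    rw [Complex.cpow_neg, div_eq_mul_inv]
  rwa [hfun] at hshift

lemma bound_Hfun (r α : ℕ) (hα : α ≠ 0) {σ₀ : ℝ} (hσ : 0 < σ₀) {s : ℂ} (hs : σ₀ ≤ s.re) :
    ‖Hfun (r+1) α s‖
      ≤ ∏ p ∈ α.primeFactors, (Dc σ₀ r * ((α.factorization p + 1 : ℕ) : ℝ) ^ r) := by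
  rw [Hfun_eq r α hα (lt_of_lt_of_le hσ hs), ← Finset.prod_mul_distrib, norm_prod]
  exact Finset.prod_le_prod (fun p _ => norm_nonneg _)
    (fun p hp => factor_bound r hα (Nat.prime_of_mem_primeFactors hp) hσ hs)

/-- For `Re s > 1`, `∑_m τ_k(αm) m^{-s} = H_α(s) ζ(s)^k`; moreover for `σ₀, ε > 0` one has
`H_α(s) ≪_{k,σ₀,ε} α^ε` uniformly on `Re s ≥ σ₀`. -/
theorem stmt4 (k : ℕ) (hk : 2 ≤ k) :
    (∀ α : ℕ, 0 < α → ∀ s : ℂ, 1 < s.re →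
      HasSum (fun m : ℕ => (tauk k (α * (m + 1)) : ℂ) * ((m + 1 : ℂ) ^ (-s)))
        (Hfun k α s * riemannZeta s ^ k)) ∧
    ∀ σ₀ ε : ℝ, 0 < σ₀ → 0 < ε → ∃ C : ℝ, ∀ α : ℕ, 0 < α → ∀ s : ℂ, σ₀ ≤ s.re →
      ‖Hfun k α s‖ ≤ C * (α : ℝ) ^ ε := by
  obtain ⟨r, rfl⟩ : ∃ r, k = r + 1 := ⟨k - 1, by omega⟩
  have hr : r ≠ 0 := by omega
  constructor
  · intro α hα s hs
    exact part1 r α hα hs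
  · intro σ₀ ε hσ hε
    obtain ⟨C, hC⟩ := prod_bound (le_max_left 1 _ : (1:ℝ) ≤ Dc σ₀ r) r hr hε
    refine ⟨C, fun α hα s hs => ?_⟩
    exact (bound_Hfun r α hα.ne' hσ hs).trans (hC α hα.ne')
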